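/- For every finite abstract argumentation framework AF, the grounded-stratified labeling is unique: if S1 and S2 are both grounded-stratified labelings of AF then S1 = S2. -/

import Mathlib

/-- Labels for arguments: in, out, undecided. -/
inductive Lab : Type where
  | argIn | argOut | argUndec
  deriving DecidableEq

/-- The set of arguments in `C` labeled `in` by `L`. -/
def inSet {α : Type*} (C : Set α) (L : α → Lab) : Set α := {a ∈ C | L a = Lab.argIn}

/-- The set of arguments in `C` labeled `undec` by `L`. -/
def undecSet {α : Type*} (C : Set α) (L : α → Lab) : Set α := {a ∈ C | L a = Lab.argUndec}

/-- `L` is a complete labeling of the subframework of `att` on the set `C` of arguments. -/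
def IsCompleteLab {α : Type*} (att : α → α → Prop) (C : Set α) (L : α → Lab) : Prop :=
  (∀ a ∈ C, L a = Lab.argOut → ∃ b ∈ C, L b = Lab.argIn ∧ att b a) ∧
  (∀ a ∈ C, L a = Lab.argIn → ∀ b ∈ C, att b a → L b = Lab.argOut) ∧
  (∀ a ∈ C, L a = Lab.argUndec →
    (∀ b ∈ C, att b a → L b ≠ Lab.argIn) ∧ (∃ b ∈ C, att b a ∧ L b ≠ Lab.argOut))

/-- The five semantics considered. -/
inductive Sem : Type where
  | complete | grounded | preferred | stable | semiStable

/-- `SemLab σ att C L` : `L` is a `σ`-labeling of the subframework of `att` on `C`. -/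
def SemLab {α : Type*} : Sem → (α → α → Prop) → Set α → (α → Lab) → Prop
  | Sem.complete, att, C, L => IsCompleteLab att C L
  | Sem.grounded, att, C, L => IsCompleteLab att C L ∧
      ∀ L', IsCompleteLab att C L' → inSet C L' ⊆ inSet C L → inSet C L ⊆ inSet C L'
  | Sem.preferred, att, C, L => IsCompleteLab att C L ∧
      ∀ L', IsCompleteLab att C L' → inSet C L ⊆ inSet C L' → inSet C L' ⊆ inSet C L
  | Sem.stable, att, C, L => IsCompleteLab att C L ∧ undecSet C L = ∅
  | Sem.semiStable, att, C, L => IsCompleteLab att C L ∧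
      ∀ L', IsCompleteLab att C L' → undecSet C L' ⊆ undecSet C L → undecSet C L ⊆ undecSet C L'

/-- `Stratified σ att C S` : `S` is a `σ`-stratified labeling of the subframework of `att`
on the set `C` of arguments (values of `S` outside `C` are irrelevant). -/
inductive Stratified {α : Type*} (σ : Sem) (att : α → α → Prop) : Set α → (α → ℕ∞) → Prop
  | ofEmpty {C : Set α} {S : α → ℕ∞} (L : α → Lab)
      (hL : SemLab σ att C L) (hin : inSet C L = ∅)
      (hS : ∀ a ∈ C, S a = ⊤) : Stratified σ att C S
  | ofStep {C : Set α} {S : α → ℕ∞} (L : α → Lab) (S' : α → ℕ∞)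
      (hL : SemLab σ att C L) (hin : (inSet C L).Nonempty)
      (hS' : Stratified σ att (C \ inSet C L) S')
      (h0 : ∀ a ∈ inSet C L, S a = 0)
      (h1 : ∀ a ∈ C \ inSet C L, S a = 1 + S' a) :
      Stratified σ att C S

namespace GSU

variable {α : Type*}

/-- The defense operator on the subframework on `C`. -/
def F (att : α → α → Prop) (C : Set α) : Set α →o Set α where
  toFun E := {a | a ∈ C ∧ ∀ b ∈ C, att b a → ∃ c ∈ E, att c b}
  monotone' := by
    intro E E' h a ha
    refine ⟨ha.1, fun b hb hba => ?_⟩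
    obtain ⟨c, hcE, hcb⟩ := ha.2 b hb hba
    exact ⟨c, h hcE, hcb⟩

lemma out_iff {att : α → α → Prop} {C : Set α} {L : α → Lab}
    (hL : IsCompleteLab att C L) {a : α} (ha : a ∈ C) :
    L a = Lab.argOut ↔ ∃ b ∈ C, L b = Lab.argIn ∧ att b a := by
  constructor
  · exact hL.1 a ha
  · rintro ⟨b, hb, hbin, hba⟩
    cases h : L a with
    | argOut => rfl
    | argIn => exact absurd (hL.2.1 a ha h b hb hba) (by rw [hbin]; simp)
    | argUndec => exact absurd hbin ((hL.2.2 a ha h).1 b hb hba)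

lemma in_iff {att : α → α → Prop} {C : Set α} {L : α → Lab}
    (hL : IsCompleteLab att C L) {a : α} (ha : a ∈ C) :
    L a = Lab.argIn ↔ ∀ b ∈ C, att b a → L b = Lab.argOut := by
  constructor
  · exact hL.2.1 a ha
  · intro h
    cases ha' : L a with
    | argIn => rfl
    | argOut =>
      obtain ⟨b, hb, hbin, hba⟩ := hL.1 a ha ha'
      rw [h b hb hba] at hbin; simp at hbin
    | argUndec =>
      obtain ⟨b, hb, hba, hbno⟩ := (hL.2.2 a ha ha').2
      exact absurd (h b hb hba) hbno

lemma inSet_fixed {att : α → α → Prop} {C : Set α} {L : α → Lab}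
    (hL : IsCompleteLab att C L) : F att C (inSet C L) = inSet C L := by
  ext a
  simp only [F, OrderHom.coe_mk, Set.mem_setOf_eq, inSet, Set.mem_sep_iff]
  constructor
  · rintro ⟨haC, h⟩
    refine ⟨haC, (in_iff hL haC).2 fun b hb hba => ?_⟩
    obtain ⟨c, ⟨hcC, hcin⟩, hcb⟩ := h b hb hba
    exact (out_iff hL hb).2 ⟨c, hcC, hcin, hcb⟩
  · rintro ⟨haC, hain⟩
    refine ⟨haC, fun b hb hba => ?_⟩
    have hbout := hL.2.1 a haC hain b hb hba
    obtain ⟨c, hc, hcin, hcb⟩ := hL.1 b hb hbout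
    exact ⟨c, ⟨hc, hcin⟩, hcb⟩

/-- The grounded in-set: least fixed point of the defense operator. -/
def G (att : α → α → Prop) (C : Set α) : Set α := OrderHom.lfp (F att C)

lemma G_fixed (att : α → α → Prop) (C : Set α) : F att C (G att C) = G att C :=
  OrderHom.map_lfp _

lemma G_subset (att : α → α → Prop) (C : Set α) : G att C ⊆ C := by
  rw [← G_fixed]; exact fun a ha => ha.1

lemma G_le_inSet {att : α → α → Prop} {C : Set α} {L : α → Lab}
    (hL : IsCompleteLab att C L) : G att C ⊆ inSet C L :=
  OrderHom.lfp_le _ (le_of_eq (inSet_fixed hL))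

lemma G_cf (att : α → α → Prop) (C : Set α) :
    ∀ a ∈ G att C, ¬ ∃ b ∈ G att C, att b a := by
  have : ∀ a ∈ G att C, ¬ ∃ b ∈ G att C, att b a := by
    refine OrderHom.lfp_induction (F att C)
      (p := fun E => ∀ a ∈ E, ¬ ∃ b ∈ G att C, att b a) ?_ ?_
    · rintro E hpE hEle a haFE ⟨b, hbG, hba⟩
      obtain ⟨c, hcE, hcb⟩ := haFE.2 b (G_subset att C hbG) hba
      have hbFG : b ∈ F att C (G att C) := by rw [G_fixed]; exact hbG
      obtain ⟨d, hdG, hdc⟩ := hbFG.2 c ((G_subset att C) (hEle hcE)) hcb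
      exact hpE c hcE ⟨d, hdG, hdc⟩
    · rintro s hs a ha hb
      obtain ⟨E, hEs, haE⟩ := ha
      exact hs E hEs a haE hb
  exact this

open Classical in
/-- The grounded labeling induced by `G`. -/
noncomputable def Lg (att : α → α → Prop) (C : Set α) : α → Lab := fun a =>
  if a ∈ G att C then Lab.argIn
  else if ∃ c ∈ G att C, att c a then Lab.argOut
  else Lab.argUndec

lemma Lg_in_iff {att : α → α → Prop} {C : Set α} {a : α} :
    Lg att C a = Lab.argIn ↔ a ∈ G att C := by
  unfold Lg
  split
  · simp_all
  · split <;> simp_all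

lemma Lg_out_iff {att : α → α → Prop} {C : Set α} {a : α} :
    Lg att C a = Lab.argOut ↔ (a ∉ G att C ∧ ∃ c ∈ G att C, att c a) := by
  unfold Lg
  split
  · rename_i h
    simp only [reduceCtorEq, false_iff]; tauto
  · split <;> simp_all

lemma Lg_complete (att : α → α → Prop) (C : Set α) : IsCompleteLab att C (Lg att C) := by
  refine ⟨?_, ?_, ?_⟩
  · intro a _ ha
    obtain ⟨_, c, hcG, hca⟩ := Lg_out_iff.1 ha
    exact ⟨c, G_subset att C hcG, Lg_in_iff.2 hcG, hca⟩
  · intro a _ ha b hb hba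
    have haG : a ∈ G att C := Lg_in_iff.1 ha
    have haFG : a ∈ F att C (G att C) := by rw [G_fixed]; exact haG
    obtain ⟨c, hcG, hcb⟩ := haFG.2 b hb hba
    refine Lg_out_iff.2 ⟨fun hbG => G_cf att C b hbG ⟨c, hcG, hcb⟩, c, hcG, hcb⟩
  · intro a haC ha
    have h1 : a ∉ G att C := by
      intro h; rw [Lg_in_iff.2 h] at ha; simp at ha
    have h2 : ¬ ∃ c ∈ G att C, att c a := by
      intro h; rw [Lg_out_iff.2 ⟨h1, h⟩] at ha; simp at ha
    constructor
    · intro b hb hba hbin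
      exact h2 ⟨b, Lg_in_iff.1 hbin, hba⟩
    · have : a ∉ F att C (G att C) := by rw [G_fixed]; exact h1
      change ¬ (a ∈ C ∧ ∀ b ∈ C, att b a → ∃ c ∈ G att C, att c b) at this
      simp only [F, OrderHom.coe_mk, Set.mem_setOf_eq, not_and] at this
      push_neg at this
      obtain ⟨b, hb, hba, hbno⟩ := this haC
      refine ⟨b, hb, hba, fun hbout => ?_⟩
      obtain ⟨_, c, hcG, hcb⟩ := Lg_out_iff.1 hbout
      exact hbno c hcG hcb

lemma inSet_Lg (att : α → α → Prop) (C : Set α) : inSet C (Lg att C) = G att C := by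
  ext a
  simp only [inSet, Set.mem_sep_iff, Lg_in_iff]
  exact ⟨fun h => h.2, fun h => ⟨G_subset att C h, h⟩⟩

lemma grounded_inSet_eq {att : α → α → Prop} {C : Set α} {L : α → Lab}
    (hL : SemLab Sem.grounded att C L) : inSet C L = G att C := by
  have h1 : G att C ⊆ inSet C L := G_le_inSet hL.1
  have h2 : inSet C L ⊆ G att C := by
    have := hL.2 (Lg att C) (Lg_complete att C) (by rw [inSet_Lg]; exact h1)
    rwa [inSet_Lg] at this
  exact Set.Subset.antisymm h2 h1

lemma strat_eq_on {att : α → α → Prop} {C : Set α} {S₁ S₂ : α → ℕ∞}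
    (h₁ : Stratified Sem.grounded att C S₁) (h₂ : Stratified Sem.grounded att C S₂) :
    ∀ a ∈ C, S₁ a = S₂ a := by
  induction h₁ generalizing S₂ with
  | ofEmpty L hL hin hS =>
    cases h₂ with
    | ofEmpty L₂ hL₂ hin₂ hS₂ =>
      intro a ha; rw [hS a ha, hS₂ a ha]
    | ofStep L₂ S₂' hL₂ hin₂ hS₂' h0₂ h1₂ =>
      rw [grounded_inSet_eq hL₂, ← grounded_inSet_eq hL, hin] at hin₂
      exact absurd hin₂ Set.not_nonempty_empty
  | ofStep L S' hL hin hS' h0 h1 ih =>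
    cases h₂ with
    | ofEmpty L₂ hL₂ hin₂ hS₂ =>
      rw [grounded_inSet_eq hL₂, ← grounded_inSet_eq hL] at hin₂
      rw [hin₂] at hin
      exact absurd hin Set.not_nonempty_empty
    | ofStep L₂ S₂' hL₂ hin₂ hS₂' h0₂ h1₂ =>
      have key := (grounded_inSet_eq hL₂).trans (grounded_inSet_eq hL).symm
      rw [key] at hS₂' h0₂ h1₂
      rename Set _ => D
      intro a ha
      by_cases hmem : a ∈ inSet D L
      · rw [h0 a hmem, h0₂ a hmem]
      · have hd : a ∈ D \ inSet D L := ⟨ha, hmem⟩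
        rw [h1 a hd, h1₂ a hd, ih hS₂' a hd]

end GSU

/-- The grounded-stratified labeling of a finite abstract argumentation
framework is unique. -/
theorem grounded_stratified_unique {α : Type*} [Fintype α] (att : α → α → Prop)
    (S₁ S₂ : α → ℕ∞)
    (h₁ : Stratified Sem.grounded att Set.univ S₁)
    (h₂ : Stratified Sem.grounded att Set.univ S₂) :
    S₁ = S₂ := by
  funext a
  exact GSU.strat_eq_on h₁ h₂ a (Set.mem_univ a)
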